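/- arXiv:2103.04583 — 5 statements merged into one kernel-verified Lean document; each statement's English description precedes it below -/
import Mathlib

section
/- With the notation of the previous decomposition, for each j ∈ {1,...,n−1}, Σ_{i=0}^{n-1} W_i W_{i+j}ᵀ = (λ/n)(J_v − I_v), where indices are taken modulo n. -/
open Matrix Finset

/-- If `W = ∑ i, w^i • W i` is a balanced generalized weighing matrix
`BGW(v,k,λ)` over the cyclic group of `n`-th roots of unity, then for each
`j ≠ 0`, `∑ i, W i * (W (i+j))ᵀ = (λ/n)(J - I)`. -/
theorem bgw_decomposition_shifted_index (n : ℕ) [NeZero n] (v k lam : ℕ)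
    (W : ZMod n → Matrix (Fin v) (Fin v) ℚ)
    (h01 : ∀ i x y, W i x y = 0 ∨ W i x y = 1)
    (hdisj : ∀ x y, ∀ i j : ZMod n, i ≠ j → W i x y = 1 → W j x y ≠ 1)
    (hrow : ∀ x : Fin v,
      (Finset.univ.filter fun c => ∃ i : ZMod n, W i x c = 1).card = k)
    (hbal : ∀ x y : Fin v, x ≠ y → ∀ t : ZMod n,
      ((Finset.univ.filter fun c =>
          ∃ i : ZMod n, W i x c = 1 ∧ W (i - t) y c = 1).card : ℚ) = (lam : ℚ) / n) :
    ∀ j : ZMod n, j ≠ 0 →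
      ∑ i : ZMod n, W i * (W (i + j))ᵀ
        = ((lam : ℚ) / n) • ((Matrix.of fun _ _ => (1 : ℚ)) - 1) := by
  intro j hj
  ext x y
  simp only [Matrix.sum_apply, Matrix.mul_apply, Matrix.transpose_apply,
    Matrix.smul_apply, Matrix.sub_apply, Matrix.of_apply, Matrix.one_apply, smul_eq_mul]
  by_cases hxy : x = y
  · subst hxy
    rw [if_pos rfl, sub_self, mul_zero]
    refine Finset.sum_eq_zero fun i _ => Finset.sum_eq_zero fun c _ => ?_
    rcases h01 i x c with h | h
    · rw [h, zero_mul]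
    · have hne : i ≠ i + j := by
        intro he
        exact hj (by simpa using he.symm)
      rcases h01 (i + j) x c with h' | h'
      · rw [h', mul_zero]
      · exact absurd h' (hdisj x c i (i + j) hne h)
  · rw [if_neg hxy, sub_zero, mul_one, Finset.sum_comm]
    have key : ∀ c, ∑ i : ZMod n, W i x c * W (i + j) y c
        = if ∃ i, W i x c = 1 ∧ W (i + j) y c = 1 then (1 : ℚ) else 0 := by
      intro c
      by_cases hex : ∃ i, W i x c = 1 ∧ W (i + j) y c = 1
      · rw [if_pos hex]
        obtain ⟨i0, h1, h2⟩ := hex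
        rw [Finset.sum_eq_single i0]
        · rw [h1, h2, one_mul]
        · intro i _ hne
          rcases h01 i x c with h | h
          · rw [h, zero_mul]
          · exact absurd h1 (hdisj x c i i0 hne h)
        · simp
      · rw [if_neg hex]
        refine Finset.sum_eq_zero fun i _ => ?_
        rcases h01 i x c with h | h
        · rw [h, zero_mul]
        · rcases h01 (i + j) y c with h' | h'
          · rw [h', mul_zero]
          · exact absurd ⟨i, h, h'⟩ hex
    rw [Finset.sum_congr rfl fun c _ => key c, Finset.sum_boole]
    have := hbal x y hxy (-j)
    simp only [sub_neg_eq_add] at this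
    exact this
end

section
/- Under the same hypotheses, Σ_{i≠j, 1≤i,j≤q} A_i A_jᵀ = q^{n−1}(J − I), where J and I are the q^n × q^n all-ones and identity matrices. -/
open Matrix Finset

/-- Under the same orthogonal-array hypotheses,
`∑_{i ≠ j} A i * (A j)ᵀ = q^(n-1) (J - I)`. -/
theorem oa_sum_distinct_indices (q n cc d : ℕ) (hq : 2 ≤ q) (hn : 2 ≤ n)
    (hcc : (q - 1) * cc = q ^ n - 1) (hd : (q - 1) * d = q ^ (n - 1) - 1)
    (A : Fin q → Matrix (Fin (q ^ n)) (Fin cc) ℤ)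
    (h01 : ∀ i x y, A i x y = 0 ∨ A i x y = 1)
    (hcell : ∀ x y, ∃! i, A i x y = 1)
    (hOA : ∀ c1 c2 : Fin cc, c1 ≠ c2 → ∀ s t : Fin q,
      (Finset.univ.filter fun x => A s x c1 = 1 ∧ A t x c2 = 1).card = q ^ (n - 2))
    (hagree : ∀ x y : Fin (q ^ n), x ≠ y →
      (Finset.univ.filter fun c => ∃ i, A i x c = 1 ∧ A i y c = 1).card = d) :
    ∑ i, ∑ j ∈ Finset.univ.erase i, A i * (A j)ᵀ
      = ((q : ℤ) ^ (n - 1)) • ((Matrix.of fun _ _ => (1 : ℤ)) - 1) := by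
  classical
  have hq0 : 0 < q := by omega
  -- numeric key : cc - d = q^(n-1) in ℤ
  have hkey : (cc : ℤ) - (d : ℤ) = (q : ℤ) ^ (n - 1) := by
    have hqn : 1 ≤ q ^ n := Nat.one_le_pow _ _ hq0
    have hqn1 : 1 ≤ q ^ (n - 1) := Nat.one_le_pow _ _ hq0
    have h1 : ((q : ℤ) - 1) * cc = (q : ℤ) ^ n - 1 := by
      have := hcc
      zify [hqn, (by omega : 1 ≤ q)] at this
      linarith
    have h2 : ((q : ℤ) - 1) * d = (q : ℤ) ^ (n - 1) - 1 := by
      have := hd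
      zify [hqn1, (by omega : 1 ≤ q)] at this
      linarith
    have hpow : (q : ℤ) ^ n = (q : ℤ) ^ (n - 1) * q := by
      rw [← pow_succ]
      congr 1
      omega
    have hne : ((q : ℤ) - 1) ≠ 0 := by
      have : (2 : ℤ) ≤ q := by exact_mod_cast hq
      linarith
    apply mul_left_cancel₀ hne
    rw [mul_sub, h1, h2, hpow]
    ring
  have hsum1 : ∀ (x : Fin (q ^ n)) (c : Fin cc), ∑ i, A i x c = 1 := by
    intro x c
    obtain ⟨i₀, hi₀, huniq⟩ := hcell x c
    rw [Finset.sum_eq_single i₀ (fun i _ h => by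
      rcases h01 i x c with h' | h'
      · exact h'
      · exact absurd (huniq i h') h) (by simp)]
    exact hi₀
  have hdiag : ∀ (x y : Fin (q ^ n)) (c : Fin cc),
      ∑ i, A i x c * A i y c = if ∃ i, A i x c = 1 ∧ A i y c = 1 then 1 else 0 := by
    intro x y c
    obtain ⟨i₀, hi₀, huniq⟩ := hcell x c
    have hs : ∑ i, A i x c * A i y c = A i₀ y c := by
      rw [Finset.sum_eq_single i₀ (fun i _ hne => by
        rcases h01 i x c with h' | h'
        · rw [h', zero_mul]
        · exact absurd (huniq i h') hne) (by simp)]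
      rw [hi₀, one_mul]
    rw [hs]
    by_cases hE : ∃ i, A i x c = 1 ∧ A i y c = 1
    · rw [if_pos hE]
      obtain ⟨i, h1, h2⟩ := hE
      rwa [huniq i h1] at h2
    · rw [if_neg hE]
      rcases h01 i₀ y c with h | h
      · exact h
      · exact absurd ⟨i₀, hi₀, h⟩ hE
  ext x y
  simp only [Matrix.sum_apply, Matrix.mul_apply, Matrix.transpose_apply,
    Matrix.smul_apply, Matrix.sub_apply, Matrix.of_apply, Matrix.one_apply, smul_eq_mul]
  have hsplit : ∀ i : Fin q, ∑ j ∈ Finset.univ.erase i, ∑ c, A i x c * A j y c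
      = (∑ j, ∑ c, A i x c * A j y c) - ∑ c, A i x c * A i y c := by
    intro i
    rw [Finset.sum_erase_eq_sub (Finset.mem_univ i)]
  rw [Finset.sum_congr rfl (fun i _ => hsplit i), Finset.sum_sub_distrib]
  have hfull : ∑ i : Fin q, ∑ j : Fin q, ∑ c : Fin cc, A i x c * A j y c = (cc : ℤ) := by
    calc ∑ i : Fin q, ∑ j : Fin q, ∑ c : Fin cc, A i x c * A j y c
        = ∑ i : Fin q, ∑ c : Fin cc, ∑ j : Fin q, A i x c * A j y c := by
          exact Finset.sum_congr rfl (fun i _ => Finset.sum_comm)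
      _ = ∑ c : Fin cc, ∑ i : Fin q, ∑ j : Fin q, A i x c * A j y c := Finset.sum_comm
      _ = ∑ c : Fin cc, (∑ i, A i x c) * (∑ j, A j y c) := by
          exact Finset.sum_congr rfl (fun c _ => by rw [Finset.sum_mul_sum])
      _ = ∑ c : Fin cc, (1 : ℤ) := by
          exact Finset.sum_congr rfl (fun c _ => by rw [hsum1 x c, hsum1 y c, one_mul])
      _ = (cc : ℤ) := by simp
  have hdiagsum : ∑ i : Fin q, ∑ c : Fin cc, A i x c * A i y c
      = ∑ c : Fin cc, if ∃ i, A i x c = 1 ∧ A i y c = 1 then (1 : ℤ) else 0 := by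
    rw [Finset.sum_comm]
    exact Finset.sum_congr rfl (fun c _ => hdiag x y c)
  rw [hfull, hdiagsum]
  by_cases hxy : x = y
  · subst hxy
    have : ∀ c : Fin cc, (if ∃ i, A i x c = 1 ∧ A i x c = 1 then (1 : ℤ) else 0) = 1 := by
      intro c
      obtain ⟨i₀, hi₀, _⟩ := hcell x c
      rw [if_pos ⟨i₀, hi₀, hi₀⟩]
    rw [Finset.sum_congr rfl (fun c _ => this c)]
    simp
  · have hcard : ∑ c : Fin cc, (if ∃ i, A i x c = 1 ∧ A i y c = 1 then (1 : ℤ) else 0)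
        = ((Finset.univ.filter fun c => ∃ i, A i x c = 1 ∧ A i y c = 1).card : ℤ) := by
      rw [Finset.sum_boole]
    rw [hcard, hagree x y hxy]
    rw [if_neg hxy]
    rw [hkey]
    ring
end

section
/- Let A_1,...,A_9 be N×c disjoint (0,1)-matrices with Σ_i A_i A_iᵀ = a J_N + b I_N and Σ_{i≠j} A_i A_jᵀ = e (J_N − I_N), and let r_1,...,r_9 be row vectors (rows of a matrix Y) of length 18 with r_i r_iᵀ = 8 and r_i r_jᵀ = −1 for i ≠ j. Then D := Σ_{i=1}^9 A_i ⊗ r_i satisfies D Dᵀ = (8b + e) I_N + (8a − e) J_N. -/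
open Matrix Kronecker Finset

/-- If `A₁,…,A₉` are disjoint `(0,1)`-matrices with
`∑ Aᵢ Aᵢᵀ = a J + b I` and `∑_{i≠j} Aᵢ Aⱼᵀ = e (J − I)`, and the row vectors
`r₁,…,r₉` satisfy `rᵢ rᵢᵀ = 8`, `rᵢ rⱼᵀ = −1 (i ≠ j)`, then
`D = ∑ Aᵢ ⊗ rᵢ` satisfies `D Dᵀ = (8b+e) I + (8a−e) J`. -/
theorem kronecker_oa_construction (N c : ℕ) (a b e : ℚ)
    (A : Fin 9 → Matrix (Fin N) (Fin c) ℚ)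
    (h01 : ∀ i x y, A i x y = 0 ∨ A i x y = 1)
    (hdisj : ∀ x y, ∀ i j : Fin 9, i ≠ j → A i x y = 1 → A j x y ≠ 1)
    (hAA : ∑ i, A i * (A i)ᵀ
      = a • (Matrix.of fun _ _ => (1 : ℚ)) + b • (1 : Matrix (Fin N) (Fin N) ℚ))
    (hAB : ∑ i, ∑ j ∈ Finset.univ.erase i, A i * (A j)ᵀ
      = e • ((Matrix.of fun _ _ => (1 : ℚ)) - (1 : Matrix (Fin N) (Fin N) ℚ)))
    (r : Fin 9 → Matrix (Fin 1) (Fin 18) ℚ)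
    (hr : ∀ i j, r i * (r j)ᵀ
      = if i = j then (8 : ℚ) • (1 : Matrix (Fin 1) (Fin 1) ℚ)
        else (-1 : ℚ) • (1 : Matrix (Fin 1) (Fin 1) ℚ)) :
    (∑ i, A i ⊗ₖ r i) * (∑ i, A i ⊗ₖ r i)ᵀ
      = (8 * b + e) • (1 : Matrix (Fin N × Fin 1) (Fin N × Fin 1) ℚ)
        + (8 * a - e) • (Matrix.of fun _ _ => (1 : ℚ)) := by
  have key : (∑ i, A i ⊗ₖ r i) * (∑ i, A i ⊗ₖ r i)ᵀ
      = ∑ i, ∑ j, (A i * (A j)ᵀ) ⊗ₖ (r i * (r j)ᵀ) := by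
    rw [Matrix.transpose_sum, Matrix.sum_mul]
    refine Finset.sum_congr rfl fun i _ => ?_
    rw [Matrix.mul_sum]
    refine Finset.sum_congr rfl fun j _ => ?_
    rw [Matrix.mul_kronecker_mul, Matrix.kroneckerMap_transpose]
  rw [key]
  have split : ∀ i : Fin 9, ∑ j, (A i * (A j)ᵀ) ⊗ₖ (r i * (r j)ᵀ)
      = (8 : ℚ) • ((A i * (A i)ᵀ) ⊗ₖ (1 : Matrix (Fin 1) (Fin 1) ℚ))
        + ∑ j ∈ Finset.univ.erase i,
            (-1 : ℚ) • ((A i * (A j)ᵀ) ⊗ₖ (1 : Matrix (Fin 1) (Fin 1) ℚ)) := by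
    intro i
    rw [← Finset.add_sum_erase _ _ (Finset.mem_univ i)]
    congr 1
    · rw [hr i i, if_pos rfl, Matrix.kronecker_smul]
    · refine Finset.sum_congr rfl fun j hj => ?_
      rw [hr i j, if_neg (Finset.ne_of_mem_erase hj).symm, Matrix.kronecker_smul]
  simp only [split]
  rw [Finset.sum_add_distrib, ← Finset.smul_sum]
  have h1 : ∑ i, (A i * (A i)ᵀ) ⊗ₖ (1 : Matrix (Fin 1) (Fin 1) ℚ)
      = (∑ i, A i * (A i)ᵀ) ⊗ₖ (1 : Matrix (Fin 1) (Fin 1) ℚ) := by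
    ext ⟨x, u⟩ ⟨y, v⟩
    simp [Matrix.sum_apply, Finset.sum_mul, sub_mul]
  have h2 : ∑ i, ∑ j ∈ Finset.univ.erase i,
        (-1 : ℚ) • ((A i * (A j)ᵀ) ⊗ₖ (1 : Matrix (Fin 1) (Fin 1) ℚ))
      = (-1 : ℚ) • ((∑ i, ∑ j ∈ Finset.univ.erase i, A i * (A j)ᵀ)
          ⊗ₖ (1 : Matrix (Fin 1) (Fin 1) ℚ)) := by
    simp only [← Finset.smul_sum]
    congr 1
    ext ⟨x, u⟩ ⟨y, v⟩
    simp [Matrix.sum_apply, Finset.sum_mul, sub_mul]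
  rw [h1, h2, hAA, hAB]
  ext ⟨x, u⟩ ⟨y, v⟩
  fin_cases u <;> fin_cases v <;>
    simp [Matrix.one_apply, Prod.ext_iff, Matrix.smul_apply, Matrix.add_apply,
      Matrix.sub_apply] <;> by_cases hxy : x = y <;> simp [hxy] <;> ring
end

section
/- Let W = W_1 − W_2 be a balanced weighing matrix with parameters (v,k,λ) with v > k as above, and define the six 4v×4v matrices A_0,...,A_5 as in the paper (using P = [[0,1],[1,0]]). Then A_0 = I, Σ_{i=0}^5 A_i = J_{4v}, each A_i is symmetric, and A_3² = k A_0 + (k(k−1)/(2(v−1))) A_2. -/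
open Matrix Kronecker

namespace BGWScheme

def P : Matrix (Fin 2) (Fin 2) ℚ := !![0, 1; 1, 0]

def J2 : Matrix (Fin 2) (Fin 2) ℚ := Matrix.of fun _ _ => 1

def Jv (v : ℕ) : Matrix (Fin v) (Fin v) ℚ := Matrix.of fun _ _ => 1

/-- Index set for the `4v × 4v` matrices of the scheme. -/
abbrev Idx (v : ℕ) := (Fin 2 × Fin v) ⊕ (Fin 2 × Fin v)

def A0 (v : ℕ) : Matrix (Idx v) (Idx v) ℚ := 1

def A1 (v : ℕ) : Matrix (Idx v) (Idx v) ℚ :=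
  Matrix.fromBlocks (P ⊗ₖ (1 : Matrix (Fin v) (Fin v) ℚ)) 0 0
    (P ⊗ₖ (1 : Matrix (Fin v) (Fin v) ℚ))

def A2 (v : ℕ) : Matrix (Idx v) (Idx v) ℚ :=
  Matrix.fromBlocks (J2 ⊗ₖ (Jv v - 1)) 0 0 (J2 ⊗ₖ (Jv v - 1))

def A3 (v : ℕ) (W1 W2 : Matrix (Fin v) (Fin v) ℚ) : Matrix (Idx v) (Idx v) ℚ :=
  Matrix.fromBlocks 0 ((1 : Matrix (Fin 2) (Fin 2) ℚ) ⊗ₖ W1 + P ⊗ₖ W2)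
    ((1 : Matrix (Fin 2) (Fin 2) ℚ) ⊗ₖ W1ᵀ + P ⊗ₖ W2ᵀ) 0

def A4 (v : ℕ) (W1 W2 : Matrix (Fin v) (Fin v) ℚ) : Matrix (Idx v) (Idx v) ℚ :=
  Matrix.fromBlocks 0 ((1 : Matrix (Fin 2) (Fin 2) ℚ) ⊗ₖ W2 + P ⊗ₖ W1)
    ((1 : Matrix (Fin 2) (Fin 2) ℚ) ⊗ₖ W2ᵀ + P ⊗ₖ W1ᵀ) 0

def A5 (v : ℕ) (W1 W2 : Matrix (Fin v) (Fin v) ℚ) : Matrix (Idx v) (Idx v) ℚ :=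
  Matrix.fromBlocks 0 (J2 ⊗ₖ (Jv v - W1 - W2)) (J2 ⊗ₖ (Jv v - W1ᵀ - W2ᵀ)) 0

lemma PP : P * P = 1 := by
  ext i j; fin_cases i <;> fin_cases j <;>
    simp [P, Matrix.mul_apply, Fin.sum_univ_two, Matrix.one_apply]

lemma Psymm : Pᵀ = P := by
  ext i j; fin_cases i <;> fin_cases j <;> simp [P]

lemma J2eq : J2 = 1 + P := by
  ext i j; fin_cases i <;> fin_cases j <;> simp [J2, P, Matrix.one_apply]

lemma blockAux (v : ℕ) (k μ : ℚ) (S D : Matrix (Fin v) (Fin v) ℚ)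
    (hS : S = (k - μ) • (1 : Matrix (Fin v) (Fin v) ℚ) + μ • Jv v)
    (hD : D = μ • Jv v - μ • (1 : Matrix (Fin v) (Fin v) ℚ)) :
    (1 : Matrix (Fin 2) (Fin 2) ℚ) ⊗ₖ S + P ⊗ₖ D
      = k • (1 : Matrix (Fin 2 × Fin v) (Fin 2 × Fin v) ℚ) + μ • (J2 ⊗ₖ (Jv v - 1)) := by
  subst hS hD
  ext ⟨i, x⟩ ⟨j, y⟩
  fin_cases i <;> fin_cases j <;>
    simp [Matrix.kroneckerMap_apply, Matrix.one_apply, Jv, J2, P, Matrix.add_apply,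
      Matrix.sub_apply, Matrix.smul_apply, Prod.ext_iff, smul_eq_mul] <;>
    split_ifs <;> ring

lemma J2symm : J2ᵀ = J2 := rfl

lemma Jvsymm (v : ℕ) : (Jv v)ᵀ = Jv v := rfl

lemma halve {α : Type*} [Fintype α] (X Y : Matrix α α ℚ)
    (h : (2:ℚ) • X = (2:ℚ) • Y) : X = Y :=
  smul_right_injective _ two_ne_zero h

/-- For a balanced weighing matrix `W = W₁ − W₂` with parameters `(v,k,λ)`,
`λ = k(k−1)/(v−1)`, `v > k`, the matrices `A₀,…,A₅` satisfy `A₀ = I`,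
`∑ Aᵢ = J`, each `Aᵢ` is symmetric, and
`A₃² = k A₀ + (k(k−1)/(2(v−1))) A₂`. -/
theorem scheme_basic_relations (v : ℕ) (hv : 1 < v) (k : ℚ) (hvk : k < v)
    (W1 W2 : Matrix (Fin v) (Fin v) ℚ)
    (h01a : ∀ x y, W1 x y = 0 ∨ W1 x y = 1)
    (h01b : ∀ x y, W2 x y = 0 ∨ W2 x y = 1)
    (hdisj : ∀ x y, W1 x y = 1 → W2 x y ≠ 1)
    (hW : (W1 - W2) * (W1 - W2)ᵀ = k • (1 : Matrix (Fin v) (Fin v) ℚ))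
    (hW' : (W1 - W2)ᵀ * (W1 - W2) = k • (1 : Matrix (Fin v) (Fin v) ℚ))
    (hN : (W1 + W2) * (W1 + W2)ᵀ
      = (k - k * (k - 1) / ((v : ℚ) - 1)) • (1 : Matrix (Fin v) (Fin v) ℚ)
        + (k * (k - 1) / ((v : ℚ) - 1)) • Jv v)
    (hN' : (W1 + W2)ᵀ * (W1 + W2)
      = (k - k * (k - 1) / ((v : ℚ) - 1)) • (1 : Matrix (Fin v) (Fin v) ℚ)
        + (k * (k - 1) / ((v : ℚ) - 1)) • Jv v) :
    A0 v = 1 ∧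
    A0 v + A1 v + A2 v + A3 v W1 W2 + A4 v W1 W2 + A5 v W1 W2
      = (Matrix.of fun _ _ => (1 : ℚ)) ∧
    ((A1 v)ᵀ = A1 v ∧ (A2 v)ᵀ = A2 v ∧ (A3 v W1 W2)ᵀ = A3 v W1 W2 ∧
      (A4 v W1 W2)ᵀ = A4 v W1 W2 ∧ (A5 v W1 W2)ᵀ = A5 v W1 W2) ∧
    A3 v W1 W2 * A3 v W1 W2
      = k • A0 v + (k * (k - 1) / (2 * ((v : ℚ) - 1))) • A2 v := by
  have hd : ((v:ℚ) - 1) ≠ 0 := by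
    have : (1:ℚ) < (v:ℚ) := by exact_mod_cast hv
    linarith
  set μ : ℚ := k * (k - 1) / (2 * ((v : ℚ) - 1)) with hμ
  have hlam : k * (k - 1) / ((v : ℚ) - 1) = 2 * μ := by
    rw [hμ]; field_simp
  rw [hlam] at hN hN'
  -- expanded equations
  have e1 : W1*W1ᵀ + W2*W2ᵀ - (W1*W2ᵀ + W2*W1ᵀ) = k • (1 : Matrix (Fin v) (Fin v) ℚ) := by
    rw [← hW, transpose_sub]; noncomm_ring
  have e2 : W1*W1ᵀ + W2*W2ᵀ + (W1*W2ᵀ + W2*W1ᵀ)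
      = (k - 2*μ) • (1 : Matrix (Fin v) (Fin v) ℚ) + (2*μ) • Jv v := by
    rw [← hN, transpose_add]; noncomm_ring
  have e1' : W1ᵀ*W1 + W2ᵀ*W2 - (W1ᵀ*W2 + W2ᵀ*W1) = k • (1 : Matrix (Fin v) (Fin v) ℚ) := by
    rw [← hW', transpose_sub]; noncomm_ring
  have e2' : W1ᵀ*W1 + W2ᵀ*W2 + (W1ᵀ*W2 + W2ᵀ*W1)
      = (k - 2*μ) • (1 : Matrix (Fin v) (Fin v) ℚ) + (2*μ) • Jv v := by
    rw [← hN', transpose_add]; noncomm_ring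
  have hS : W1*W1ᵀ + W2*W2ᵀ = (k - μ) • (1 : Matrix (Fin v) (Fin v) ℚ) + μ • Jv v := by
    apply halve
    calc (2:ℚ) • (W1*W1ᵀ + W2*W2ᵀ)
        = (W1*W1ᵀ + W2*W2ᵀ - (W1*W2ᵀ + W2*W1ᵀ)) + (W1*W1ᵀ + W2*W2ᵀ + (W1*W2ᵀ + W2*W1ᵀ)) := by
          module
      _ = k • (1 : Matrix (Fin v) (Fin v) ℚ)
          + ((k - 2*μ) • (1 : Matrix (Fin v) (Fin v) ℚ) + (2*μ) • Jv v) := by rw [e1, e2]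
      _ = (2:ℚ) • ((k - μ) • (1 : Matrix (Fin v) (Fin v) ℚ) + μ • Jv v) := by module
  have hD : W1*W2ᵀ + W2*W1ᵀ = μ • Jv v - μ • (1 : Matrix (Fin v) (Fin v) ℚ) := by
    apply halve
    calc (2:ℚ) • (W1*W2ᵀ + W2*W1ᵀ)
        = (W1*W1ᵀ + W2*W2ᵀ + (W1*W2ᵀ + W2*W1ᵀ)) - (W1*W1ᵀ + W2*W2ᵀ - (W1*W2ᵀ + W2*W1ᵀ)) := by
          module
      _ = ((k - 2*μ) • (1 : Matrix (Fin v) (Fin v) ℚ) + (2*μ) • Jv v)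
          - k • (1 : Matrix (Fin v) (Fin v) ℚ) := by rw [e1, e2]
      _ = (2:ℚ) • (μ • Jv v - μ • (1 : Matrix (Fin v) (Fin v) ℚ)) := by module
  have hS' : W1ᵀ*W1 + W2ᵀ*W2 = (k - μ) • (1 : Matrix (Fin v) (Fin v) ℚ) + μ • Jv v := by
    apply halve
    calc (2:ℚ) • (W1ᵀ*W1 + W2ᵀ*W2)
        = (W1ᵀ*W1 + W2ᵀ*W2 - (W1ᵀ*W2 + W2ᵀ*W1)) + (W1ᵀ*W1 + W2ᵀ*W2 + (W1ᵀ*W2 + W2ᵀ*W1)) := by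
          module
      _ = k • (1 : Matrix (Fin v) (Fin v) ℚ)
          + ((k - 2*μ) • (1 : Matrix (Fin v) (Fin v) ℚ) + (2*μ) • Jv v) := by rw [e1', e2']
      _ = (2:ℚ) • ((k - μ) • (1 : Matrix (Fin v) (Fin v) ℚ) + μ • Jv v) := by module
  have hD' : W1ᵀ*W2 + W2ᵀ*W1 = μ • Jv v - μ • (1 : Matrix (Fin v) (Fin v) ℚ) := by
    apply halve
    calc (2:ℚ) • (W1ᵀ*W2 + W2ᵀ*W1)
        = (W1ᵀ*W1 + W2ᵀ*W2 + (W1ᵀ*W2 + W2ᵀ*W1)) - (W1ᵀ*W1 + W2ᵀ*W2 - (W1ᵀ*W2 + W2ᵀ*W1)) := by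
          module
      _ = ((k - 2*μ) • (1 : Matrix (Fin v) (Fin v) ℚ) + (2*μ) • Jv v)
          - k • (1 : Matrix (Fin v) (Fin v) ℚ) := by rw [e1', e2']
      _ = (2:ℚ) • (μ • Jv v - μ • (1 : Matrix (Fin v) (Fin v) ℚ)) := by module
  refine ⟨rfl, ?_, ?_, ?_⟩
  · ext i j
    rcases i with ⟨i, x⟩ | ⟨i, x⟩ <;> rcases j with ⟨j, y⟩ | ⟨j, y⟩ <;>
      fin_cases i <;> fin_cases j <;>
      simp [A0, A1, A2, A3, A4, A5, P, J2, Jv, Matrix.one_apply,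
        Matrix.kroneckerMap_apply, Prod.ext_iff] <;>
      first
      | ring
      | (split_ifs <;> ring)
  · refine ⟨?_, ?_, ?_, ?_, ?_⟩ <;>
      simp [A1, A2, A3, A4, A5, Matrix.fromBlocks_transpose, Matrix.transpose_add,
        Matrix.transpose_sub, ← Matrix.kroneckerMap_transpose, Psymm, Matrix.transpose_one,
        J2symm, Jvsymm]
  · -- A3 * A3
    have hBC : ((1 : Matrix (Fin 2) (Fin 2) ℚ) ⊗ₖ W1 + P ⊗ₖ W2)
          * ((1 : Matrix (Fin 2) (Fin 2) ℚ) ⊗ₖ W1ᵀ + P ⊗ₖ W2ᵀ)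
        = (1 : Matrix (Fin 2) (Fin 2) ℚ) ⊗ₖ (W1*W1ᵀ + W2*W2ᵀ) + P ⊗ₖ (W1*W2ᵀ + W2*W1ᵀ) := by
      simp only [add_mul, mul_add, ← mul_kronecker_mul, PP, one_mul, mul_one,
        Matrix.kronecker_add]
      abel
    have hCB : ((1 : Matrix (Fin 2) (Fin 2) ℚ) ⊗ₖ W1ᵀ + P ⊗ₖ W2ᵀ)
          * ((1 : Matrix (Fin 2) (Fin 2) ℚ) ⊗ₖ W1 + P ⊗ₖ W2)
        = (1 : Matrix (Fin 2) (Fin 2) ℚ) ⊗ₖ (W1ᵀ*W1 + W2ᵀ*W2) + P ⊗ₖ (W1ᵀ*W2 + W2ᵀ*W1) := by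
      simp only [add_mul, mul_add, ← mul_kronecker_mul, PP, one_mul, mul_one,
        Matrix.kronecker_add]
      abel
    rw [A3, Matrix.fromBlocks_multiply]
    simp only [Matrix.mul_zero, Matrix.zero_mul, add_zero, zero_add, mul_zero, zero_mul]
    rw [hBC, hCB, blockAux v k μ _ _ hS hD, blockAux v k μ _ _ hS' hD', A0, A2, ← Matrix.fromBlocks_one,
      Matrix.fromBlocks_smul, Matrix.fromBlocks_smul, Matrix.fromBlocks_add]
    simp

end BGWScheme
end

section
/- For any (0,1)-matrices N (v×v) with N Nᵀ = Nᵀ N = (k−λ) I_v + λ J_v, the four 2v×2v matrices B_0 = I_{2v}, B_1 = diag(J_v−I_v, J_v−I_v), B_2 = antidiag(N, Nᵀ), B_3 = antidiag(J_v−N, J_v−Nᵀ) form a symmetric association scheme: they are symmetric (0,1)-matrices summing to J_{2v} with B_0 = I, and all pairwise products lie in their linear span. -/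
open Matrix Finset

namespace SymDesignScheme

def Jv (v : ℕ) : Matrix (Fin v) (Fin v) ℚ := Matrix.of fun _ _ => 1

/-- The four `2v × 2v` block matrices built from the incidence matrix `N` of
a symmetric `(v,k,λ)`-design. -/
def B (v : ℕ) (N : Matrix (Fin v) (Fin v) ℚ) :
    Fin 4 → Matrix (Fin v ⊕ Fin v) (Fin v ⊕ Fin v) ℚ :=
  ![1,
    Matrix.fromBlocks (Jv v - 1) 0 0 (Jv v - 1),
    Matrix.fromBlocks 0 N Nᵀ 0,
    Matrix.fromBlocks 0 (Jv v - N) (Jv v - Nᵀ) 0]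

lemma exists_int_sum {n : ℕ} (f : Fin n → ℚ) (h : ∀ y, f y = 0 ∨ f y = 1) :
    ∃ a : ℤ, (a : ℚ) = ∑ y, f y := by
  refine ⟨∑ y, if f y = 1 then 1 else 0, ?_⟩
  push_cast
  refine Finset.sum_congr rfl fun y _ => ?_
  rcases h y with h | h <;> simp [h]

/-- The blocks `B₀ = I`, `B₁ = diag(J−I, J−I)`, `B₂ = antidiag(N, Nᵀ)`,
`B₃ = antidiag(J−N, J−Nᵀ)` form a symmetric association scheme: they are
symmetric `(0,1)`-matrices summing to `J` with `B₀ = I`, and all pairwise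
products lie in their linear span. -/
theorem symmetric_design_three_class_scheme (v : ℕ) (k lam : ℚ)
    (N : Matrix (Fin v) (Fin v) ℚ)
    (h01 : ∀ x y, N x y = 0 ∨ N x y = 1)
    (hN : N * Nᵀ = (k - lam) • (1 : Matrix (Fin v) (Fin v) ℚ) + lam • Jv v)
    (hN' : Nᵀ * N = (k - lam) • (1 : Matrix (Fin v) (Fin v) ℚ) + lam • Jv v)
    (hNJ : N * Jv v = k • Jv v)
    (hJN : Jv v * N = k • Jv v) :
    B v N 0 = 1 ∧
    (∀ i, (B v N i)ᵀ = B v N i) ∧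
    (∀ i x y, B v N i x y = 0 ∨ B v N i x y = 1) ∧
    (∑ i, B v N i = Matrix.of fun _ _ => (1 : ℚ)) ∧
    (∀ i j, ∃ p : Fin 4 → ℤ, B v N i * B v N j = ∑ h, (p h : ℚ) • B v N h) := by
  have hB0 : B v N 0 = 1 := rfl
  have hB0' : B v N 0 = Matrix.fromBlocks 1 0 0 1 := (Matrix.fromBlocks_one).symm
  have hB1 : B v N 1 = Matrix.fromBlocks (Jv v - 1) 0 0 (Jv v - 1) := rfl
  have hB2 : B v N 2 = Matrix.fromBlocks 0 N Nᵀ 0 := rfl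
  have hB3 : B v N 3 = Matrix.fromBlocks 0 (Jv v - N) (Jv v - Nᵀ) 0 := rfl
  have hJt : (Jv v)ᵀ = Jv v := rfl
  refine ⟨rfl, ?_, ?_, ?_, ?_⟩
  · -- symmetry
    intro i
    fin_cases i
    · exact Matrix.transpose_one
    · show (B v N 1)ᵀ = B v N 1
      rw [hB1, Matrix.fromBlocks_transpose]
      simp [Matrix.transpose_sub, hJt]
    · show (B v N 2)ᵀ = B v N 2
      rw [hB2, Matrix.fromBlocks_transpose]
      simp
    · show (B v N 3)ᵀ = B v N 3
      rw [hB3, Matrix.fromBlocks_transpose]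
      simp [Matrix.transpose_sub, hJt]
  · -- 0/1 entries
    intro i x y
    fin_cases i
    · show B v N 0 x y = 0 ∨ B v N 0 x y = 1
      rw [hB0]
      by_cases h : x = y <;> simp [Matrix.one_apply, h]
    · show B v N 1 x y = 0 ∨ B v N 1 x y = 1
      rw [hB1]
      rcases x with x | x <;> rcases y with y | y <;>
        simp [Jv, Matrix.fromBlocks, Matrix.one_apply, Matrix.sub_apply] <;>
        by_cases h : x = y <;> simp [h]
    · show B v N 2 x y = 0 ∨ B v N 2 x y = 1
      rw [hB2]
      rcases x with x | x <;> rcases y with y | y <;>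
        simp [Matrix.fromBlocks] <;>
        first
          | (rcases (h01 x y) with h | h <;> simp [h])
          | (rcases (h01 y x) with h | h <;> simp [h])
    · show B v N 3 x y = 0 ∨ B v N 3 x y = 1
      rw [hB3]
      rcases x with x | x <;> rcases y with y | y <;>
        simp [Jv, Matrix.fromBlocks, Matrix.sub_apply] <;>
        first
          | (rcases (h01 x y) with h | h <;> simp [h])
          | (rcases (h01 y x) with h | h <;> simp [h])
  · -- sum
    rw [Fin.sum_univ_four]
    ext x y
    rcases x with x | x <;> rcases y with y | y <;>
      simp [hB0, hB1, hB2, hB3, Matrix.one_apply, Jv, Matrix.fromBlocks,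
        Matrix.add_apply, Matrix.sub_apply] <;>
      by_cases h : x = y <;> simp [h]
  · -- products
    intro i j
    rcases Nat.eq_zero_or_pos v with hv | hv
    · subst hv
      exact ⟨0, by ext x y; exact x.elim (fun t => t.elim0) (fun t => t.elim0)⟩
    -- k is an integer
    obtain ⟨a, ha⟩ : ∃ a : ℤ, (a : ℚ) = k := by
      have h := congrFun (congrFun hNJ ⟨0, hv⟩) ⟨0, hv⟩
      simp [Matrix.mul_apply, Jv, Matrix.smul_apply] at h
      obtain ⟨a, ha⟩ := exists_int_sum (fun y => N ⟨0, hv⟩ y) (fun y => h01 _ y)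
      exact ⟨a, by rw [ha, h]⟩
    -- a suitable integer b playing the role of lam
    obtain ⟨b, hNb, hNb'⟩ : ∃ b : ℤ,
        N * Nᵀ = ((a : ℚ) - b) • (1 : Matrix (Fin v) (Fin v) ℚ) + (b : ℚ) • Jv v ∧
        Nᵀ * N = ((a : ℚ) - b) • (1 : Matrix (Fin v) (Fin v) ℚ) + (b : ℚ) • Jv v := by
      rcases eq_or_lt_of_le (show 1 ≤ v from hv) with h1 | h2
      · -- v = 1 : take b = a, using Jv 1 = 1
        have hv1 : v = 1 := h1.symm
        subst hv1
        have hJ1 : Jv 1 = 1 := by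
          ext x y
          rw [Subsingleton.elim x y]
          simp [Jv, Matrix.one_apply]
        refine ⟨a, ?_, ?_⟩
        · rw [hN, hJ1, ← ha]; module
        · rw [hN', hJ1, ← ha]; module
      · -- v ≥ 2 : lam itself is an integer
        have h2' : (1 : ℕ) < v := h2
        have hne : (⟨0, hv⟩ : Fin v) ≠ ⟨1, h2'⟩ := by
          simp [Fin.ext_iff]
        have h := congrFun (congrFun hN ⟨0, hv⟩) ⟨1, h2'⟩
        simp [Matrix.mul_apply, Jv, Matrix.smul_apply, Matrix.one_apply, hne,
          Matrix.add_apply] at h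
        obtain ⟨b, hb⟩ := exists_int_sum (fun y => N ⟨0, hv⟩ y * N ⟨1, h2'⟩ y)
          (fun y => by rcases (h01 ⟨0, hv⟩ y) with h | h <;>
            rcases (h01 ⟨1, h2'⟩ y) with h' | h' <;> simp [h, h'])
        have hbl : (b : ℚ) = lam := by rw [hb, h]
        refine ⟨b, ?_, ?_⟩
        · rw [hN, ha, hbl]
        · rw [hN', ha, hbl]
    have hJJ : Jv v * Jv v = (v : ℚ) • Jv v := by
      ext x y; simp [Jv, Matrix.mul_apply]
    have hNJ' : N * Jv v = (a : ℚ) • Jv v := by rw [hNJ, ha]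
    have hJN' : Jv v * N = (a : ℚ) • Jv v := by rw [hJN, ha]
    have hNtJ : Nᵀ * Jv v = (a : ℚ) • Jv v := by
      have h := congrArg Matrix.transpose hJN'
      rwa [Matrix.transpose_mul, hJt, Matrix.transpose_smul, hJt] at h
    have hJNt : Jv v * Nᵀ = (a : ℚ) • Jv v := by
      have h := congrArg Matrix.transpose hNJ'
      rwa [Matrix.transpose_mul, hJt, Matrix.transpose_smul, hJt] at h
    -- helper for the trivial multiplications by B₀
    have P0 : ∀ (j' : Fin 4) (p : Fin 4 → ℤ),
        (B v N j' = (p 0 : ℚ) • B v N 0 + (p 1 : ℚ) • B v N 1 +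
          (p 2 : ℚ) • B v N 2 + (p 3 : ℚ) • B v N 3) →
        (B v N 0 * B v N j' = ∑ h, (p h : ℚ) • B v N h) ∧
        (B v N j' * B v N 0 = ∑ h, (p h : ℚ) • B v N h) := by
      intro j' p hp
      constructor <;> rw [Fin.sum_univ_four] <;>
        [rw [hB0, one_mul]; rw [hB0, mul_one]] <;> exact hp
    have P00 := P0 0 ![1, 0, 0, 0] (by norm_num [Matrix.cons_val_two, Matrix.cons_val_three, Matrix.vecHead, Matrix.vecTail])
    have P01 := P0 1 ![0, 1, 0, 0] (by norm_num [Matrix.cons_val_two, Matrix.cons_val_three, Matrix.vecHead, Matrix.vecTail])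
    have P02 := P0 2 ![0, 0, 1, 0] (by norm_num [Matrix.cons_val_two, Matrix.cons_val_three, Matrix.vecHead, Matrix.vecTail])
    have P03 := P0 3 ![0, 0, 0, 1] (by norm_num [Matrix.cons_val_two, Matrix.cons_val_three, Matrix.vecHead, Matrix.vecTail])
    -- the nontrivial products
    have key : ∀ (i' j' : Fin 4) (p : Fin 4 → ℤ),
        B v N i' * B v N j' = (p 0 : ℚ) • B v N 0 + (p 1 : ℚ) • B v N 1 +
          (p 2 : ℚ) • B v N 2 + (p 3 : ℚ) • B v N 3 →
        ∃ p : Fin 4 → ℤ, B v N i' * B v N j' = ∑ h, (p h : ℚ) • B v N h :=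
      fun i' j' p hp => ⟨p, by rw [Fin.sum_univ_four]; exact hp⟩
    have P11 : B v N 1 * B v N 1 =
        (((v : ℤ) - 1 : ℤ) : ℚ) • B v N 0 + (((v : ℤ) - 2 : ℤ) : ℚ) • B v N 1 +
          ((0 : ℤ) : ℚ) • B v N 2 + ((0 : ℤ) : ℚ) • B v N 3 := by
      rw [hB0', hB1, hB2, hB3, Matrix.fromBlocks_multiply]
      simp only [Matrix.fromBlocks_smul, Matrix.fromBlocks_add, Matrix.fromBlocks_inj]
      refine ⟨?_, ?_, ?_, ?_⟩ <;>
      · simp only [Matrix.mul_zero, Matrix.zero_mul, Matrix.mul_one, Matrix.one_mul,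
          sub_mul, mul_sub, zero_add, add_zero, hJJ, hJN', hNJ', hNtJ, hJNt, hNb, hNb']
        push_cast
        module
    have P12 : B v N 1 * B v N 2 =
        ((0 : ℤ) : ℚ) • B v N 0 + ((0 : ℤ) : ℚ) • B v N 1 +
          ((a - 1 : ℤ) : ℚ) • B v N 2 + ((a : ℤ) : ℚ) • B v N 3 := by
      rw [hB0', hB1, hB2, hB3, Matrix.fromBlocks_multiply]
      simp only [Matrix.fromBlocks_smul, Matrix.fromBlocks_add, Matrix.fromBlocks_inj]
      refine ⟨?_, ?_, ?_, ?_⟩ <;>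
      · simp only [Matrix.mul_zero, Matrix.zero_mul, Matrix.mul_one, Matrix.one_mul,
          sub_mul, mul_sub, zero_add, add_zero, hJJ, hJN', hNJ', hNtJ, hJNt, hNb, hNb']
        push_cast
        module
    have P21 : B v N 2 * B v N 1 =
        ((0 : ℤ) : ℚ) • B v N 0 + ((0 : ℤ) : ℚ) • B v N 1 +
          ((a - 1 : ℤ) : ℚ) • B v N 2 + ((a : ℤ) : ℚ) • B v N 3 := by
      rw [hB0', hB1, hB2, hB3, Matrix.fromBlocks_multiply]
      simp only [Matrix.fromBlocks_smul, Matrix.fromBlocks_add, Matrix.fromBlocks_inj]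
      refine ⟨?_, ?_, ?_, ?_⟩ <;>
      · simp only [Matrix.mul_zero, Matrix.zero_mul, Matrix.mul_one, Matrix.one_mul,
          sub_mul, mul_sub, zero_add, add_zero, hJJ, hJN', hNJ', hNtJ, hJNt, hNb, hNb']
        push_cast
        module
    have P13 : B v N 1 * B v N 3 =
        ((0 : ℤ) : ℚ) • B v N 0 + ((0 : ℤ) : ℚ) • B v N 1 +
          (((v : ℤ) - a : ℤ) : ℚ) • B v N 2 + (((v : ℤ) - a - 1 : ℤ) : ℚ) • B v N 3 := by
      rw [hB0', hB1, hB2, hB3, Matrix.fromBlocks_multiply]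
      simp only [Matrix.fromBlocks_smul, Matrix.fromBlocks_add, Matrix.fromBlocks_inj]
      refine ⟨?_, ?_, ?_, ?_⟩ <;>
      · simp only [Matrix.mul_zero, Matrix.zero_mul, Matrix.mul_one, Matrix.one_mul,
          sub_mul, mul_sub, zero_add, add_zero, hJJ, hJN', hNJ', hNtJ, hJNt, hNb, hNb']
        push_cast
        module
    have P31 : B v N 3 * B v N 1 =
        ((0 : ℤ) : ℚ) • B v N 0 + ((0 : ℤ) : ℚ) • B v N 1 +
          (((v : ℤ) - a : ℤ) : ℚ) • B v N 2 + (((v : ℤ) - a - 1 : ℤ) : ℚ) • B v N 3 := by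
      rw [hB0', hB1, hB2, hB3, Matrix.fromBlocks_multiply]
      simp only [Matrix.fromBlocks_smul, Matrix.fromBlocks_add, Matrix.fromBlocks_inj]
      refine ⟨?_, ?_, ?_, ?_⟩ <;>
      · simp only [Matrix.mul_zero, Matrix.zero_mul, Matrix.mul_one, Matrix.one_mul,
          sub_mul, mul_sub, zero_add, add_zero, hJJ, hJN', hNJ', hNtJ, hJNt, hNb, hNb']
        push_cast
        module
    have P22 : B v N 2 * B v N 2 =
        ((a : ℤ) : ℚ) • B v N 0 + ((b : ℤ) : ℚ) • B v N 1 +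
          ((0 : ℤ) : ℚ) • B v N 2 + ((0 : ℤ) : ℚ) • B v N 3 := by
      rw [hB0', hB1, hB2, hB3, Matrix.fromBlocks_multiply]
      simp only [Matrix.fromBlocks_smul, Matrix.fromBlocks_add, Matrix.fromBlocks_inj]
      refine ⟨?_, ?_, ?_, ?_⟩ <;>
      · simp only [Matrix.mul_zero, Matrix.zero_mul, Matrix.mul_one, Matrix.one_mul,
          sub_mul, mul_sub, zero_add, add_zero, hJJ, hJN', hNJ', hNtJ, hJNt, hNb, hNb']
        push_cast
        module
    have P23 : B v N 2 * B v N 3 =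
        ((0 : ℤ) : ℚ) • B v N 0 + ((a - b : ℤ) : ℚ) • B v N 1 +
          ((0 : ℤ) : ℚ) • B v N 2 + ((0 : ℤ) : ℚ) • B v N 3 := by
      rw [hB0', hB1, hB2, hB3, Matrix.fromBlocks_multiply]
      simp only [Matrix.fromBlocks_smul, Matrix.fromBlocks_add, Matrix.fromBlocks_inj]
      refine ⟨?_, ?_, ?_, ?_⟩ <;>
      · simp only [Matrix.mul_zero, Matrix.zero_mul, Matrix.mul_one, Matrix.one_mul,
          sub_mul, mul_sub, zero_add, add_zero, hJJ, hJN', hNJ', hNtJ, hJNt, hNb, hNb']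
        push_cast
        module
    have P32 : B v N 3 * B v N 2 =
        ((0 : ℤ) : ℚ) • B v N 0 + ((a - b : ℤ) : ℚ) • B v N 1 +
          ((0 : ℤ) : ℚ) • B v N 2 + ((0 : ℤ) : ℚ) • B v N 3 := by
      rw [hB0', hB1, hB2, hB3, Matrix.fromBlocks_multiply]
      simp only [Matrix.fromBlocks_smul, Matrix.fromBlocks_add, Matrix.fromBlocks_inj]
      refine ⟨?_, ?_, ?_, ?_⟩ <;>
      · simp only [Matrix.mul_zero, Matrix.zero_mul, Matrix.mul_one, Matrix.one_mul,
          sub_mul, mul_sub, zero_add, add_zero, hJJ, hJN', hNJ', hNtJ, hJNt, hNb, hNb']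
        push_cast
        module
    have P33 : B v N 3 * B v N 3 =
        (((v : ℤ) - a : ℤ) : ℚ) • B v N 0 + (((v : ℤ) - 2 * a + b : ℤ) : ℚ) • B v N 1 +
          ((0 : ℤ) : ℚ) • B v N 2 + ((0 : ℤ) : ℚ) • B v N 3 := by
      rw [hB0', hB1, hB2, hB3, Matrix.fromBlocks_multiply]
      simp only [Matrix.fromBlocks_smul, Matrix.fromBlocks_add, Matrix.fromBlocks_inj]
      refine ⟨?_, ?_, ?_, ?_⟩ <;>
      · simp only [Matrix.mul_zero, Matrix.zero_mul, Matrix.mul_one, Matrix.one_mul,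
          sub_mul, mul_sub, zero_add, add_zero, hJJ, hJN', hNJ', hNtJ, hJNt, hNb, hNb']
        push_cast
        module
    fin_cases i <;> fin_cases j
    · exact ⟨_, P00.1⟩
    · exact ⟨_, P01.1⟩
    · exact ⟨_, P02.1⟩
    · exact ⟨_, P03.1⟩
    · exact ⟨_, P01.2⟩
    · exact key 1 1 ![(v : ℤ) - 1, (v : ℤ) - 2, 0, 0] P11
    · exact key 1 2 ![0, 0, a - 1, a] P12
    · exact key 1 3 ![0, 0, (v : ℤ) - a, (v : ℤ) - a - 1] P13
    · exact ⟨_, P02.2⟩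
    · exact key 2 1 ![0, 0, a - 1, a] P21
    · exact key 2 2 ![a, b, 0, 0] P22
    · exact key 2 3 ![0, a - b, 0, 0] P23
    · exact ⟨_, P03.2⟩
    · exact key 3 1 ![0, 0, (v : ℤ) - a, (v : ℤ) - a - 1] P31
    · exact key 3 2 ![0, a - b, 0, 0] P32
    · exact key 3 3 ![(v : ℤ) - a, (v : ℤ) - 2 * a + b, 0, 0] P33
end SymDesignScheme
end
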